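/- Let H_A be a Hilbert space of dimension d₁·d₂, Π a projector on H_A with Tr Π = d₁, and ρ a density operator on H_A commuting with Π such that Tr(ρΠ) ≥ 1 − ε. Then there exists a unitary U : H_A → H_B ⊗ H_C with dim H_B = d₁ and dim H_C = d₂, and a unit vector |0⟩ in H_C, such that ‖U ρ U† − Tr_C'(ΠρΠ viewed on H_B) ⊗ |0⟩⟨0|‖₁ ≤ ε, i.e. UρU† is ε-close in trace norm to a state of the form σ^B ⊗ |0⟩⟨0|^C where σ^B is the compression ΠρΠ regarded as an operator on H_B. -/

import Mathlib

open Matrix Kronecker BigOperators ComplexOrder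

/-- Trace norm `‖A‖₁ = Tr √(Aᴴ A)`. -/
noncomputable def traceNorm {n : Type*} [Fintype n] [DecidableEq n]
    (A : Matrix n n ℂ) : ℝ :=
  (((Matrix.posSemidef_conjTranspose_mul_self A).1.eigenvectorUnitary.1 *
      Matrix.diagonal (fun i => ((Real.sqrt
        ((Matrix.posSemidef_conjTranspose_mul_self A).1.eigenvalues i) : ℝ) : ℂ)) *
      (star (Matrix.posSemidef_conjTranspose_mul_self A).1.eigenvectorUnitary :
        Matrix n n ℂ)).trace).re

/-- Von Neumann entropy (base 2), via eigenvalues; `0` for non-Hermitian input. -/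
noncomputable def vnEntropy {n : Type*} [Fintype n] [DecidableEq n]
    (ρ : Matrix n n ℂ) : ℝ :=
  if h : ρ.IsHermitian then
    -∑ i, (h.eigenvalues i) * Real.logb 2 (h.eigenvalues i)
  else 0

/-- A density operator: positive semidefinite with unit trace. -/
def IsDensity {n : Type*} [Fintype n] (ρ : Matrix n n ℂ) : Prop :=
  ρ.PosSemidef ∧ ρ.trace = 1

/-- Rank-one projector `|v⟩⟨v|`. -/
noncomputable def proj {n : Type*} (v : n → ℂ) : Matrix n n ℂ :=
  Matrix.vecMulVec v (star v)

/-- Partial trace over the second tensor factor. -/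
noncomputable def ptraceSnd {a b : Type*} [Fintype b]
    (ρ : Matrix (a × b) (a × b) ℂ) : Matrix a a ℂ :=
  Matrix.of fun i j => ∑ k, ρ (i, k) (j, k)

/-- Partial trace over the first tensor factor. -/
noncomputable def ptraceFst {a b : Type*} [Fintype a]
    (ρ : Matrix (a × b) (a × b) ℂ) : Matrix b b ℂ :=
  Matrix.of fun i j => ∑ k, ρ (k, i) (k, j)

/-- Quantum mutual information `I(A;B) = H(A) + H(B) − H(AB)`. -/
noncomputable def mutualInfo {a b : Type*} [Fintype a] [Fintype b]
    [DecidableEq a] [DecidableEq b] (ρ : Matrix (a × b) (a × b) ℂ) : ℝ :=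
  vnEntropy (ptraceSnd ρ) + vnEntropy (ptraceFst ρ) - vnEntropy ρ

/-- `n`-fold tensor power of a matrix. -/
noncomputable def tpow {d : ℕ} (ρ : Matrix (Fin d) (Fin d) ℂ) (n : ℕ) :
    Matrix (Fin n → Fin d) (Fin n → Fin d) ℂ :=
  Matrix.of fun f g => ∏ i, ρ (f i) (g i)

/-- The cq state obtained by measuring the `A` part of a bipartite state with POVM `Λ`:
`ρ^{XB} = Σ_x |x⟩⟨x| ⊗ Tr_A((Λ_x ⊗ I)ρ)`. -/
noncomputable def measureA {a b m : Type*} [Fintype a] [DecidableEq m]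
    (Λ : m → Matrix a a ℂ) (ρ : Matrix (a × b) (a × b) ℂ) :
    Matrix (m × b) (m × b) ℂ :=
  Matrix.of fun xi yj =>
    if xi.1 = yj.1 then ∑ k, ∑ l, (Λ xi.1) k l * ρ (l, xi.2) (k, yj.2) else 0

/-- Unitarity for (possibly rectangular between index types) matrices. -/
def IsUnitaryMat {p q : Type*} [Fintype p] [Fintype q] [DecidableEq p] [DecidableEq q]
    (U : Matrix p q ℂ) : Prop :=
  U * Uᴴ = 1 ∧ Uᴴ * U = 1

open scoped MatrixOrder in
lemma traceNorm_of_posSemidef {n : Type*} [Fintype n] [DecidableEq n]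
    {A : Matrix n n ℂ} (hA : A.PosSemidef) : traceNorm A = A.trace.re := by
  unfold traceNorm
  have hAA := Matrix.posSemidef_conjTranspose_mul_self A
  have key : ((Matrix.posSemidef_conjTranspose_mul_self A).1.eigenvectorUnitary.1 *
      Matrix.diagonal (fun i => ((Real.sqrt
        ((Matrix.posSemidef_conjTranspose_mul_self A).1.eigenvalues i) : ℝ) : ℂ)) *
      (star (Matrix.posSemidef_conjTranspose_mul_self A).1.eigenvectorUnitary :
        Matrix n n ℂ)) = A := by
    have h1 : CFC.sqrt (Aᴴ * A) = A := by
      rw [hA.1.eq, CFC.sqrt_mul_self A hA.nonneg]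
    rw [CFC.sqrt_eq_cfc, cfc_nnreal_eq_real _ (Aᴴ * A) hAA.nonneg, hAA.1.cfc_eq] at h1
    refine Eq.trans ?_ h1
    simp [Matrix.IsHermitian.cfc, Function.comp_def, Real.coe_sqrt, Real.coe_toNNReal',
      hAA.eigenvalues_nonneg]
  rw [key]

theorem compression_unitary {d₁ d₂ : ℕ}
    (ρ P : Matrix (Fin (d₁ * d₂)) (Fin (d₁ * d₂)) ℂ) (ε : ℝ)
    (hρ : IsDensity ρ) (hP : P.IsHermitian) (hP2 : P * P = P)
    (htr : P.trace = (d₁ : ℂ)) (hcomm : P * ρ = ρ * P)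
    (h : 1 - ε ≤ (ρ * P).trace.re) :
    ∃ U : Matrix (Fin d₁ × Fin d₂) (Fin (d₁ * d₂)) ℂ, IsUnitaryMat U ∧
      ∃ v : Fin d₂ → ℂ, star v ⬝ᵥ v = 1 ∧
        ∃ σB : Matrix (Fin d₁) (Fin d₁) ℂ,
          U * (P * ρ * P) * Uᴴ = σB ⊗ₖ proj v ∧
          traceNorm (U * ρ * Uᴴ - σB ⊗ₖ proj v) ≤ ε := by
  classical
  -- nondegeneracy
  have hNpos : 0 < d₁ * d₂ := by
    rcases Nat.eq_zero_or_pos (d₁ * d₂) with h0 | h0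
    · exfalso
      have : ρ.trace = 0 := by
        haveI : IsEmpty (Fin (d₁ * d₂)) := by rw [h0]; infer_instance
        simp [Matrix.trace]
      rw [hρ.2] at this; exact one_ne_zero this
    · exact h0
  have hd₂ : 0 < d₂ := Nat.pos_of_ne_zero fun h0 => by simp [h0] at hNpos
  haveI : NeZero d₂ := ⟨hd₂.ne'⟩
  -- spectral data
  set V : Matrix (Fin (d₁ * d₂)) (Fin (d₁ * d₂)) ℂ := (hP.eigenvectorUnitary : Matrix (Fin (d₁ * d₂)) (Fin (d₁ * d₂)) ℂ) with hVdef
  set lam : Fin (d₁ * d₂) → ℝ := hP.eigenvalues with hlamdef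
  set c : Fin (d₁ * d₂) → ℂ := fun i => (lam i : ℂ) with hcdef
  have hspec : P = V * Matrix.diagonal c * Vᴴ := by
    have := hP.spectral_theorem
    simp [Matrix.star_eq_conjTranspose, Function.comp] at this
    exact this
  have hV1 : V * Vᴴ = 1 := by
    have := (Matrix.mem_unitaryGroup_iff).mp hP.eigenvectorUnitary.2
    simpa [Matrix.star_eq_conjTranspose] using this
  have hV2 : Vᴴ * V = 1 := by
    have := (Matrix.mem_unitaryGroup_iff').mp hP.eigenvectorUnitary.2
    simpa [Matrix.star_eq_conjTranspose] using this
  set D : Matrix (Fin (d₁ * d₂)) (Fin (d₁ * d₂)) ℂ := Matrix.diagonal c with hDdef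
  have hD : Vᴴ * P * V = D := by
    rw [hspec]
    calc Vᴴ * (V * D * Vᴴ) * V = (Vᴴ * V) * D * (Vᴴ * V) := by
          simp only [Matrix.mul_assoc]
      _ = D := by rw [hV2, Matrix.one_mul, Matrix.mul_one]
  have hDD : D * D = D := by
    rw [← hD]
    calc (Vᴴ * P * V) * (Vᴴ * P * V) = Vᴴ * P * (V * Vᴴ) * (P * V) := by
          simp only [Matrix.mul_assoc]
      _ = Vᴴ * (P * P) * V := by
          rw [hV1, Matrix.mul_one, Matrix.mul_assoc, Matrix.mul_assoc, Matrix.mul_assoc]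
      _ = Vᴴ * P * V := by rw [hP2]
  have hlam01 : ∀ i, lam i = 0 ∨ lam i = 1 := by
    intro i
    have h1 : (D * D) i i = D i i := by rw [hDD]
    rw [hDdef, Matrix.diagonal_mul_diagonal, Matrix.diagonal_apply_eq,
      Matrix.diagonal_apply_eq] at h1
    have h2 : c i * (c i - 1) = 0 := by
      have : c i * c i = c i := h1
      ring_nf
      linear_combination this
    rcases mul_eq_zero.mp h2 with h3 | h3
    · left
      have h4 : (lam i : ℂ) = 0 := h3
      exact_mod_cast h4
    · right
      have h4 : (lam i : ℂ) = 1 := by linear_combination h3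
      exact_mod_cast h4
  -- predicate selecting eigenvalue-1 subspace
  set pS : Fin (d₁ * d₂) → Prop := fun i => lam i = 1 with hpSdef
  have htrP : (∑ i, c i) = (d₁ : ℂ) := by
    have : P.trace = ∑ i, c i := by
      conv_lhs => rw [hspec]
      rw [Matrix.trace_mul_cycle, hV2, Matrix.one_mul, hDdef, Matrix.trace_diagonal]
    rw [← this, htr]
  have hcardS : Fintype.card {i // pS i} = d₁ := by
    have hsum : (∑ i, c i) = ∑ i, (if pS i then (1 : ℂ) else 0) := by
      refine Finset.sum_congr rfl fun i _ => ?_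
      rcases hlam01 i with h0 | h0
      · rw [if_neg (show ¬ pS i by simp [hpSdef, h0])]
        simp [hcdef, h0]
      · rw [if_pos (show pS i from h0)]
        simp [hcdef, h0]
    rw [hsum, Finset.sum_boole] at htrP
    have : ((Finset.univ.filter pS).card : ℂ) = (d₁ : ℂ) := htrP
    have hnat : (Finset.univ.filter pS).card = d₁ := by exact_mod_cast this
    rw [Fintype.card_subtype, hnat]
  have hcardB : Fintype.card {p : Fin d₁ × Fin d₂ // p.2 = 0} = d₁ := by
    have eB : {p : Fin d₁ × Fin d₂ // p.2 = 0} ≃ Fin d₁ :=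
      { toFun := fun p => p.1.1
        invFun := fun i => ⟨(i, 0), rfl⟩
        left_inv := by rintro ⟨⟨i, k⟩, hk⟩; simp only at hk; subst hk; rfl
        right_inv := fun i => rfl }
    rw [Fintype.card_congr eB, Fintype.card_fin]
  have hcardTot : Fintype.card (Fin (d₁ * d₂)) = Fintype.card (Fin d₁ × Fin d₂) := by
    simp
  let e1 : {i // pS i} ≃ {p : Fin d₁ × Fin d₂ // p.2 = 0} :=
    Fintype.equivOfCardEq (by rw [hcardS, hcardB])
  let e2 : {i // ¬ pS i} ≃ {p : Fin d₁ × Fin d₂ // ¬ p.2 = 0} :=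
    Fintype.equivOfCardEq (by
      rw [Fintype.card_subtype_compl, Fintype.card_subtype_compl, hcardS, hcardB, hcardTot])
  let g : Fin (d₁ * d₂) ≃ Fin d₁ × Fin d₂ :=
    (Equiv.sumCompl pS).symm.trans ((e1.sumCongr e2).trans
      (Equiv.sumCompl (fun p : Fin d₁ × Fin d₂ => p.2 = 0)))
  have hg : ∀ x, (g x).2 = 0 ↔ pS x := by
    intro x
    by_cases hx : pS x
    · simp only [g, Equiv.trans_apply, Equiv.sumCompl_symm_apply_of_pos hx,
        Equiv.sumCongr_apply, Sum.map_inl, Equiv.sumCompl_apply_inl]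
      exact iff_of_true (e1 ⟨x, hx⟩).2 hx
    · simp only [g, Equiv.trans_apply, Equiv.sumCompl_symm_apply_of_neg hx,
        Equiv.sumCongr_apply, Sum.map_inr, Equiv.sumCompl_apply_inr]
      exact iff_of_false (e2 ⟨x, hx⟩).2 hx
  have hc : ∀ q : Fin d₁ × Fin d₂, c (g.symm q) = if q.2 = 0 then 1 else 0 := by
    intro q
    by_cases hq : q.2 = 0
    · have hp : pS (g.symm q) := (hg _).mp (by rw [Equiv.apply_symm_apply]; exact hq)
      have hp1 : lam (g.symm q) = 1 := hp
      simp only [hcdef, hp1, Complex.ofReal_one, if_pos hq]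
    · have hnot : ¬ pS (g.symm q) := fun hh =>
        hq (by rw [← Equiv.apply_symm_apply g q]; exact (hg _).mpr hh)
      have h0 : lam (g.symm q) = 0 := (hlam01 _).resolve_right hnot
      simp [hcdef, h0, hq]
  -- the unitary
  set U : Matrix (Fin d₁ × Fin d₂) (Fin (d₁ * d₂)) ℂ := Vᴴ.submatrix (⇑g.symm) id
    with hUdef
  have hUH : Uᴴ = V.submatrix id (⇑g.symm) := by
    rw [hUdef, Matrix.conjTranspose_submatrix, Matrix.conjTranspose_conjTranspose]
  have hUnit : IsUnitaryMat U := by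
    constructor
    · rw [hUdef, hUH, ← Matrix.submatrix_mul Vᴴ V (⇑g.symm) id (⇑g.symm)
        Function.bijective_id, hV2, Matrix.submatrix_one_equiv]
    · rw [hUdef, hUH, ← Matrix.submatrix_mul V Vᴴ id (⇑g.symm) id g.symm.bijective,
        Matrix.submatrix_id_id, hV1]
  -- conjugation formula
  have hconj : ∀ M : Matrix (Fin (d₁ * d₂)) (Fin (d₁ * d₂)) ℂ,
      U * M * Uᴴ = (Vᴴ * M * V).submatrix (⇑g.symm) (⇑g.symm) := by
    intro M
    rw [hUdef, hUH,
      Matrix.submatrix_mul (Vᴴ * M) V (⇑g.symm) id (⇑g.symm) Function.bijective_id,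
      Matrix.submatrix_mul Vᴴ M (⇑g.symm) id id Function.bijective_id,
      Matrix.submatrix_id_id]
  -- the key commutation facts
  have hPrr : P * ρ * P = ρ * P := by
    rw [hcomm, Matrix.mul_assoc, hP2]
  have hVPV : Vᴴ * (P * ρ * P) * V = D * (Vᴴ * ρ * V) * D := by
    have hl : Vᴴ * P = D * Vᴴ := by
      rw [hspec]
      calc Vᴴ * (V * D * Vᴴ) = (Vᴴ * V) * D * Vᴴ := by simp only [Matrix.mul_assoc]
        _ = D * Vᴴ := by rw [hV2, Matrix.one_mul]
    have hr : P * V = V * D := by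
      rw [hspec]
      calc V * D * Vᴴ * V = V * D * (Vᴴ * V) := by simp only [Matrix.mul_assoc]
        _ = V * D := by rw [hV2, Matrix.mul_one]
    calc Vᴴ * (P * ρ * P) * V = (Vᴴ * P) * ρ * (P * V) := by simp only [Matrix.mul_assoc]
      _ = (D * Vᴴ) * ρ * (V * D) := by rw [hl, hr]
      _ = D * (Vᴴ * ρ * V) * D := by simp only [Matrix.mul_assoc]
  -- vector v and σB
  set v : Fin d₂ → ℂ := fun k => if k = 0 then 1 else 0 with hvdef
  have hv : star v ⬝ᵥ v = 1 := by
    simp [dotProduct, hvdef, apply_ite, Finset.sum_ite_eq']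
  have hprojv : ∀ k l, proj v k l = (if k = 0 then 1 else 0) * (if l = 0 then 1 else 0) := by
    intro k l
    simp only [proj, Matrix.vecMulVec_apply, hvdef, Pi.star_apply]
    by_cases hk : k = 0 <;> by_cases hl : l = 0 <;> simp [hk, hl]
  set σB : Matrix (Fin d₁) (Fin d₁) ℂ :=
    Matrix.of fun i j => (Vᴴ * ρ * V) (g.symm (i, 0)) (g.symm (j, 0)) with hσdef
  refine ⟨U, hUnit, v, hv, σB, ?_, ?_⟩
  · -- exact compression identity
    ext ⟨i, k⟩ ⟨j, l⟩
    rw [hconj, Matrix.submatrix_apply, hVPV]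
    rw [show (D * (Vᴴ * ρ * V) * D) (g.symm (i, k)) (g.symm (j, l)) =
        c (g.symm (i, k)) * (Vᴴ * ρ * V) (g.symm (i, k)) (g.symm (j, l)) * c (g.symm (j, l))
      from by rw [hDdef, Matrix.mul_diagonal, Matrix.diagonal_mul]]
    rw [hc, hc]
    rw [Matrix.kroneckerMap_apply, hprojv]
    by_cases hk : k = 0 <;> by_cases hl : l = 0 <;>
      simp [hk, hl, hσdef, mul_comm]
  · -- trace norm bound
    have hΔeq : ρ - P * ρ * P = (1 - P) * ρ * (1 - P)ᴴ := by
      have hPH : (1 - P)ᴴ = 1 - P := by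
        rw [Matrix.conjTranspose_sub, Matrix.conjTranspose_one, hP.eq]
      have e1 : (1 - P) * ρ = ρ - P * ρ := by rw [Matrix.sub_mul, Matrix.one_mul]
      have e2 : (ρ - P * ρ) * (1 - P) = ρ - P * ρ - (ρ * P - P * ρ * P) := by
        rw [Matrix.mul_sub, Matrix.mul_one, Matrix.sub_mul]
      rw [hPH, e1, e2, hPrr, hcomm]
      abel
    have hΔpos : (ρ - P * ρ * P).PosSemidef := by
      rw [hΔeq]; exact hρ.1.mul_mul_conjTranspose_same (1 - P)
    have hUΔpos : (U * (ρ - P * ρ * P) * Uᴴ).PosSemidef :=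
      hΔpos.mul_mul_conjTranspose_same U
    have hsub : U * ρ * Uᴴ - σB ⊗ₖ proj v = U * (ρ - P * ρ * P) * Uᴴ := by
      have h1 : U * (P * ρ * P) * Uᴴ = σB ⊗ₖ proj v := by
        ext ⟨i, k⟩ ⟨j, l⟩
        rw [hconj, Matrix.submatrix_apply, hVPV]
        rw [show (D * (Vᴴ * ρ * V) * D) (g.symm (i, k)) (g.symm (j, l)) =
            c (g.symm (i, k)) * (Vᴴ * ρ * V) (g.symm (i, k)) (g.symm (j, l)) * c (g.symm (j, l))
          from by rw [hDdef, Matrix.mul_diagonal, Matrix.diagonal_mul]]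
        rw [hc, hc, Matrix.kroneckerMap_apply, hprojv]
        by_cases hk : k = 0 <;> by_cases hl : l = 0 <;>
          simp [hk, hl, hσdef, mul_comm]
      rw [← h1, Matrix.mul_sub, Matrix.sub_mul]
    rw [hsub, traceNorm_of_posSemidef hUΔpos]
    have htrace : (U * (ρ - P * ρ * P) * Uᴴ).trace = (ρ - P * ρ * P).trace := by
      rw [Matrix.trace_mul_cycle, hUnit.2, Matrix.one_mul]
    rw [htrace, Matrix.trace_sub, hPrr, hρ.2]
    have : (1 - (ρ * P).trace).re = 1 - (ρ * P).trace.re := by simp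
    rw [this]
    linarith
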